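/- Let β : ℝ≥0 → ℝ≥0 be a service curve for a FIFO packet system: for every time t there exists s ≤ t with O(t) ≥ N(s) + β(t−s), where N is the cumulative arrival function and O the cumulative output. Then for every packet n there exists m ≤ n such that β(Q_n − A_m) ≤ Σ_{k=m}^{n−1} l_k, where A_k is the arrival time of packet k, l_k its length, and Q_n the time at which packet n starts service (so O(Q_n⁺) = l_1 + ⋯ + l_{n−1}). -/

import Mathlib

/-- Lemma 3: if `β` is a service curve for a FIFO packet system, then
for every packet `n` there is `m ≤ n` with `β (Q n − A m) ≤ Σ_{k=m}^{n−1} l k`.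
Packets are indexed `1, 2, …, P`; `N` is the cumulative arrival function and `O`
the cumulative output. -/
theorem service_curve_packet_bound
    (P : ℕ) (A l Q : ℕ → ℝ) (N O β : ℝ → ℝ)
    (hA : Monotone A)
    (hl_pos : ∀ k, 0 < l k)
    (hβ_mono : Monotone β)
    (hβ_nonneg : ∀ t, 0 ≤ β t)
    (hβ_zero : β 0 = 0)
    (hN : ∀ s : ℝ, N s = ∑ k ∈ (Finset.Icc 1 P).filter (fun k => A k ≤ s), l k)
    (hservice : ∀ t : ℝ, ∃ s : ℝ, s ≤ t ∧ O t ≥ N s + β (t - s))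
    (n : ℕ) (hn1 : 1 ≤ n) (hnP : n ≤ P)
    (hQ : A n ≤ Q n)
    (hO : O (Q n) = ∑ k ∈ Finset.Ico 1 n, l k) :
    ∃ m, 1 ≤ m ∧ m ≤ n ∧ β (Q n - A m) ≤ ∑ k ∈ Finset.Ico m n, l k := by
  obtain ⟨s, hsQ, hserv⟩ := hservice (Q n)
  by_cases hcase : A n ≤ s
  · -- impossible: N s would include all of packets 1..n
    exfalso
    have hsub : Finset.Icc 1 n ⊆ (Finset.Icc 1 P).filter (fun k => A k ≤ s) := by
      intro k hk
      simp only [Finset.mem_Icc, Finset.mem_filter] at hk ⊢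
      exact ⟨⟨hk.1, hk.2.trans hnP⟩, le_trans (hA hk.2) hcase⟩
    have hNs : (∑ k ∈ Finset.Icc 1 n, l k) ≤ N s := by
      rw [hN]
      exact Finset.sum_le_sum_of_subset_of_nonneg hsub
        (fun k _ _ => (hl_pos k).le)
    have hsplit : (∑ k ∈ Finset.Icc 1 n, l k)
        = (∑ k ∈ Finset.Ico 1 n, l k) + l n := by
      rw [← Finset.Ico_add_one_right_eq_Icc, Finset.sum_Ico_succ_top hn1]
    have := hserv
    have hβ0 : (0:ℝ) ≤ β (Q n - s) := hβ_nonneg _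
    nlinarith [hl_pos n]
  · push_neg at hcase
    have hex : ∃ k, 1 ≤ k ∧ s < A k := ⟨n, hn1, hcase⟩
    classical
    set m := Nat.find hex with hm
    obtain ⟨hm1, hms⟩ := Nat.find_spec hex
    have hmn : m ≤ n := Nat.find_min' hex ⟨hn1, hcase⟩
    refine ⟨m, hm1, hmn, ?_⟩
    -- N s ≥ sum over Ico 1 m
    have hsub : Finset.Ico 1 m ⊆ (Finset.Icc 1 P).filter (fun k => A k ≤ s) := by
      intro k hk
      simp only [Finset.mem_Ico, Finset.mem_filter, Finset.mem_Icc] at hk ⊢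
      have hk2 : A k ≤ s := by
        by_contra h
        exact absurd ⟨hk.1, lt_of_not_ge h⟩ (Nat.find_min hex hk.2)
      exact ⟨⟨hk.1, le_trans (le_trans (Nat.le_of_lt hk.2) hmn) hnP⟩, hk2⟩
    have hNs : (∑ k ∈ Finset.Ico 1 m, l k) ≤ N s := by
      rw [hN]
      exact Finset.sum_le_sum_of_subset_of_nonneg hsub (fun k _ _ => (hl_pos k).le)
    have hβle : β (Q n - A m) ≤ β (Q n - s) :=
      hβ_mono (by linarith)
    have hsum : (∑ k ∈ Finset.Ico 1 m, l k) + (∑ k ∈ Finset.Ico m n, l k)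
        = ∑ k ∈ Finset.Ico 1 n, l k :=
      Finset.sum_Ico_consecutive _ hm1 hmn
    linarith [hserv]
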